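/- Every computably enumerable equivalence relation on ℕ all of whose equivalence classes are infinite is the connectedness relation of a computable graph of diameter 2. -/

import Mathlib

/-- A predicate on `ℕ` is computably enumerable if it is the domain of a partial computable
function. -/
def CEPred (S : ℕ → Prop) : Prop :=
  ∃ p : ℕ →. Unit, Partrec p ∧ ∀ n, (p n).Dom ↔ S n

open Nat.Partrec (Code)
open Nat.Partrec.Code

lemma cepred_approx {S : ℕ → Prop} (h : CEPred S) :
    ∃ A : ℕ → ℕ → Bool, Computable₂ A ∧ ∀ n, (S n ↔ ∃ s, A s n = true) := by
  obtain ⟨p, hp, hpd⟩ := h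
  have hq : Nat.Partrec fun n => (p n).map fun _ => 0 :=
    Partrec.nat_iff.mp (hp.map ((Computable.const 0).to₂ :
      Computable₂ fun (_ : ℕ) (_ : Unit) => 0))
  obtain ⟨c, hc⟩ := exists_code.mp hq
  refine ⟨fun s n => (evaln s c n).isSome, ?_, ?_⟩
  · have h1 : Primrec fun st : ℕ × ℕ => (evaln st.1 c st.2).isSome :=
      Primrec.option_isSome.comp
        (primrec_evaln.comp ((Primrec.fst.pair (Primrec.const c)).pair Primrec.snd))
    exact h1.to_comp
  · intro n
    have hdom : (eval c n).Dom ↔ S n := by rw [hc]; exact hpd n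
    rw [← hdom, Part.dom_iff_mem]
    constructor
    · rintro ⟨x, hx⟩
      obtain ⟨k, hk⟩ := evaln_complete.mp hx
      exact ⟨k, by rw [Option.isSome_iff_exists]; exact ⟨x, hk⟩⟩
    · rintro ⟨s, hs⟩
      rw [Option.isSome_iff_exists] at hs
      obtain ⟨x, hx⟩ := hs
      exact ⟨x, evaln_sound hx⟩

lemma computable_find {P : ℕ → ℕ → Bool} (hP : Computable₂ P) (hex : ∀ s, ∃ k, P s k = true) :
    ∃ g : ℕ → ℕ, Computable g ∧ ∀ s, P s (g s) = true := by
  classical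
  refine ⟨fun s => Nat.find (hex s), ?_, fun s => Nat.find_spec (hex s)⟩
  have h1 : Partrec fun s => Nat.rfind (P s : ℕ →. Bool) := Partrec.rfind hP.partrec₂
  exact h1.of_eq_tot fun s => Nat.mem_rfind.mpr
    ⟨by simp [Nat.find_spec (hex s)], fun {m} hm => by simp [Nat.find_min (hex s) hm]⟩

/-- The basic edge predicate: at stage `s`, both components of `e s` are joined to `z s`. -/
def edgeP (e : ℕ → ℕ × ℕ) (z : ℕ → ℕ) (s a b : ℕ) : Prop :=
  ((a = (e s).1 ∨ a = (e s).2) ∧ b = z s) ∨ ((b = (e s).1 ∨ b = (e s).2) ∧ a = z s)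

def edgeb (e : ℕ → ℕ × ℕ) (z : ℕ → ℕ) (s a b : ℕ) : Bool :=
  ((decide (a = (e s).1) || decide (a = (e s).2)) && decide (b = z s)) ||
  ((decide (b = (e s).1) || decide (b = (e s).2)) && decide (a = z s))

lemma edgeb_eq_true {e : ℕ → ℕ × ℕ} {z : ℕ → ℕ} {s a b : ℕ} :
    edgeb e z s a b = true ↔ edgeP e z s a b := by
  simp [edgeb, edgeP]

def loopb (e : ℕ → ℕ × ℕ) (z : ℕ → ℕ) (a b N : ℕ) : Bool :=
  Nat.rec false (fun s ih => ih || edgeb e z s a b) N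

lemma loopb_eq_true {e : ℕ → ℕ × ℕ} {z : ℕ → ℕ} {a b : ℕ} (N : ℕ) :
    loopb e z a b N = true ↔ ∃ s < N, edgeP e z s a b := by
  induction N with
  | zero => simp [loopb]
  | succ n ih =>
    show (loopb e z a b n || edgeb e z n a b) = true ↔ _
    rw [Bool.or_eq_true, ih, edgeb_eq_true]
    constructor
    · rintro (⟨s, hs, hPs⟩ | hPs)
      · exact ⟨s, hs.trans (Nat.lt_succ_self n), hPs⟩
      · exact ⟨n, Nat.lt_succ_self n, hPs⟩
    · rintro ⟨s, hs, hPs⟩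
      rcases Nat.lt_succ_iff_lt_or_eq.mp hs with h | rfl
      · exact Or.inl ⟨s, h, hPs⟩
      · exact Or.inr hPs

def Gb (e : ℕ → ℕ × ℕ) (z : ℕ → ℕ) (a b : ℕ) : Bool :=
  !decide (a = b) && loopb e z a b (max a b)

lemma Gb_computable {e : ℕ → ℕ × ℕ} {z : ℕ → ℕ} (he : Computable e) (hz : Computable z) :
    Computable fun n : ℕ => Gb e z n.unpair.1 n.unpair.2 := by
  have u1 : Computable fun n : ℕ => n.unpair.1 := Computable.fst.comp Computable.unpair
  have u2 : Computable fun n : ℕ => n.unpair.2 := Computable.snd.comp Computable.unpair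
  have eqc : Computable₂ fun a b : ℕ => decide (a = b) := Primrec.eq.decide.to_comp
  have orc : Computable₂ or := Primrec.or.to_comp
  have andc : Computable₂ and := Primrec.and.to_comp
  have hh : Computable fun x : ℕ × (ℕ × Bool) =>
      (x.2.2 || edgeb e z x.2.1 x.1.unpair.1 x.1.unpair.2) := by
    have xs : Computable fun x : ℕ × (ℕ × Bool) => x.2.1 := Computable.fst.comp Computable.snd
    have xih : Computable fun x : ℕ × (ℕ × Bool) => x.2.2 := Computable.snd.comp Computable.snd
    have xa : Computable fun x : ℕ × (ℕ × Bool) => x.1.unpair.1 := u1.comp Computable.fst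
    have xb : Computable fun x : ℕ × (ℕ × Bool) => x.1.unpair.2 := u2.comp Computable.fst
    have xe1 : Computable fun x : ℕ × (ℕ × Bool) => (e x.2.1).1 := Computable.fst.comp (he.comp xs)
    have xe2 : Computable fun x : ℕ × (ℕ × Bool) => (e x.2.1).2 := Computable.snd.comp (he.comp xs)
    have xz : Computable fun x : ℕ × (ℕ × Bool) => z x.2.1 := hz.comp xs
    exact orc.comp xih
      (orc.comp
        (andc.comp (orc.comp (eqc.comp xa xe1) (eqc.comp xa xe2)) (eqc.comp xb xz))
        (andc.comp (orc.comp (eqc.comp xb xe1) (eqc.comp xb xe2)) (eqc.comp xa xz)))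
  have hmax : Computable fun n : ℕ => max n.unpair.1 n.unpair.2 :=
    Primrec.nat_max.to_comp.comp u1 u2
  have hloop0 := Computable.nat_rec hmax (Computable.const false)
    (hh.to₂ : Computable₂ fun (n : ℕ) (q : ℕ × Bool) =>
      q.2 || edgeb e z q.1 n.unpair.1 n.unpair.2)
  have hloop : Computable fun n : ℕ => loopb e z n.unpair.1 n.unpair.2
      (max n.unpair.1 n.unpair.2) := hloop0.of_eq fun n => rfl
  exact andc.comp ((Primrec.not.to_comp).comp (eqc.comp u1 u2)) hloop

/-- Every computably enumerable equivalence relation on `ℕ` all of whose classes are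
infinite is the connectedness relation of a computable graph of diameter `2`. -/
theorem stmt13 (E : ℕ → ℕ → Prop) (hE : Equivalence E)
    (hce : CEPred fun n => E (Nat.unpair n).1 (Nat.unpair n).2)
    (hinf : ∀ x : ℕ, {y : ℕ | E x y}.Infinite) :
    ∃ G : ℕ → ℕ → Prop,
      ComputablePred (fun n => G (Nat.unpair n).1 (Nat.unpair n).2) ∧
      Symmetric G ∧ Irreflexive G ∧
      (∀ x y, E x y ↔ Relation.ReflTransGen G x y) ∧
      (∀ x y, E x y → x ≠ y → (G x y ∨ ∃ z, G x z ∧ G z y)) := by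
  classical
  obtain ⟨A, hA, hSA⟩ := cepred_approx hce
  have hAE : ∀ s n, A s n = true → E n.unpair.1 n.unpair.2 := fun s n h => (hSA n).mpr ⟨s, h⟩
  -- a computable enumeration of all `E`-pairs
  obtain ⟨e, he, heE, hesurj⟩ :
      ∃ e : ℕ → ℕ × ℕ, Computable e ∧ (∀ k, E (e k).1 (e k).2) ∧
        ∀ x y, E x y → ∃ k, e k = (x, y) := by
    refine ⟨fun k => bif A k.unpair.1 k.unpair.2 then k.unpair.2.unpair else (0, 0), ?_, ?_, ?_⟩
    · have u1 : Computable fun n : ℕ => n.unpair.1 := Computable.fst.comp Computable.unpair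
      have u2 : Computable fun n : ℕ => n.unpair.2 := Computable.snd.comp Computable.unpair
      exact Computable.cond (hA.comp u1 u2) (Computable.unpair.comp u2) (Computable.const (0, 0))
    · intro k
      by_cases h : A k.unpair.1 k.unpair.2 = true
      · simpa [h] using hAE _ _ h
      · rw [Bool.not_eq_true] at h
        simpa [h] using hE.refl 0
    · intro x y hxy
      obtain ⟨s, hs⟩ := (hSA (Nat.pair x y)).mp (by simpa using hxy)
      exact ⟨Nat.pair s (Nat.pair x y), by simp [hs]⟩
  -- a computable choice of fresh large elements of the classes
  obtain ⟨z, hzc, hzE, hzgt⟩ :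
      ∃ z : ℕ → ℕ, Computable z ∧ (∀ s, E (e s).1 (z s)) ∧
        ∀ s, max (max (e s).1 (e s).2) s < z s := by
    have hP : Computable₂ fun s k : ℕ =>
        (A k.unpair.1 (Nat.pair (e s).1 k.unpair.2) &&
          decide (max (max (e s).1 (e s).2) s < k.unpair.2)) := by
      have xk1 : Computable fun q : ℕ × ℕ => q.2.unpair.1 :=
        Computable.fst.comp (Computable.unpair.comp Computable.snd)
      have xk2 : Computable fun q : ℕ × ℕ => q.2.unpair.2 :=
        Computable.snd.comp (Computable.unpair.comp Computable.snd)
      have xe1 : Computable fun q : ℕ × ℕ => (e q.1).1 :=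
        Computable.fst.comp (he.comp Computable.fst)
      have xe2 : Computable fun q : ℕ × ℕ => (e q.1).2 :=
        Computable.snd.comp (he.comp Computable.fst)
      have maxc : Computable₂ (max : ℕ → ℕ → ℕ) := Primrec.nat_max.to_comp
      have hb : Computable fun q : ℕ × ℕ => max (max (e q.1).1 (e q.1).2) q.1 :=
        maxc.comp (maxc.comp xe1 xe2) Computable.fst
      have hlt : Computable fun q : ℕ × ℕ =>
          decide (max (max (e q.1).1 (e q.1).2) q.1 < q.2.unpair.2) :=
        (Primrec.nat_lt.decide.to_comp).comp hb xk2
      have hAa : Computable fun q : ℕ × ℕ => A q.2.unpair.1 (Nat.pair (e q.1).1 q.2.unpair.2) :=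
        hA.comp xk1 (Primrec₂.natPair.to_comp.comp xe1 xk2)
      exact (Primrec.and.to_comp).comp hAa hlt
    have hPex : ∀ s : ℕ, ∃ k : ℕ,
        (A k.unpair.1 (Nat.pair (e s).1 k.unpair.2) &&
          decide (max (max (e s).1 (e s).2) s < k.unpair.2)) = true := by
      intro s
      obtain ⟨w, hw, hgt⟩ := (hinf (e s).1).exists_gt (max (max (e s).1 (e s).2) s)
      obtain ⟨t, ht⟩ := (hSA (Nat.pair (e s).1 w)).mp (by simpa using hw)
      exact ⟨Nat.pair t w, by simpa [ht] using hgt⟩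
    obtain ⟨g, hg, hgP⟩ := computable_find hP hPex
    refine ⟨fun s => (g s).unpair.2, Computable.snd.comp (Computable.unpair.comp hg), ?_, ?_⟩
    · intro s
      have h := hgP s
      rw [Bool.and_eq_true] at h
      simpa using hAE _ _ h.1
    · intro s
      have h := hgP s
      rw [Bool.and_eq_true, decide_eq_true_iff] at h
      exact h.2
  -- correctness facts
  have hGE : ∀ a b, (a ≠ b ∧ ∃ s, edgeP e z s a b) → E a b := by
    rintro a b ⟨-, s, hs⟩
    have h1 : E (e s).1 (e s).2 := heE s
    have h2 : E (e s).1 (z s) := hzE s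
    rcases hs with ⟨ha | ha, rfl⟩ | ⟨hb | hb, rfl⟩
    · rw [ha]; exact h2
    · rw [ha]; exact hE.trans (hE.symm h1) h2
    · rw [hb]; exact hE.symm h2
    · rw [hb]; exact hE.symm (hE.trans (hE.symm h1) h2)
  have hdiam : ∀ x y, E x y → x ≠ y →
      ∃ w, (x ≠ w ∧ ∃ s, edgeP e z s x w) ∧ (w ≠ y ∧ ∃ s, edgeP e z s w y) := by
    intro x y hxy hne
    obtain ⟨k, hk⟩ := hesurj x y hxy
    have hgt := hzgt k
    rw [hk] at hgt
    simp only [Prod.fst, Prod.snd] at hgt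
    have hxlt : x < z k :=
      lt_of_le_of_lt (le_trans (le_max_left x y) (le_max_left _ _)) hgt
    have hylt : y < z k :=
      lt_of_le_of_lt (le_trans (le_max_right x y) (le_max_left _ _)) hgt
    have hx1 : (e k).1 = x := by rw [hk]
    have hy2 : (e k).2 = y := by rw [hk]
    exact ⟨z k, ⟨hxlt.ne, k, Or.inl ⟨Or.inl hx1.symm, rfl⟩⟩,
      ⟨hylt.ne', k, Or.inr ⟨Or.inr hy2.symm, rfl⟩⟩⟩
  have hGb : ∀ a b, (a ≠ b ∧ ∃ s, edgeP e z s a b) ↔ Gb e z a b = true := by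
    intro a b
    constructor
    · rintro ⟨hne, s, hs⟩
      have hslt : s < max a b := by
        rcases hs with ⟨-, rfl⟩ | ⟨-, rfl⟩
        · exact lt_of_lt_of_le (lt_of_le_of_lt (le_max_right _ _) (hzgt s)) (le_max_right a _)
        · exact lt_of_lt_of_le (lt_of_le_of_lt (le_max_right _ _) (hzgt s)) (le_max_left _ b)
      unfold Gb
      rw [Bool.and_eq_true, loopb_eq_true]
      exact ⟨by simp [hne], ⟨s, hslt, hs⟩⟩
    · intro h
      unfold Gb at h
      rw [Bool.and_eq_true, loopb_eq_true] at h
      obtain ⟨h1, s, -, hs⟩ := h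
      exact ⟨by simpa using h1, s, hs⟩
  refine ⟨fun a b => a ≠ b ∧ ∃ s, edgeP e z s a b, ?_, ?_, ?_, ?_, ?_⟩
  · rw [ComputablePred.computable_iff]
    exact ⟨_, Gb_computable he hzc, funext fun n => propext (hGb _ _)⟩
  · rintro a b ⟨hne, s, hs⟩
    exact ⟨hne.symm, s, Or.symm hs⟩
  · rintro a ⟨hne, -⟩
    exact hne rfl
  · intro x y
    constructor
    · intro hxy
      by_cases hne : x = y
      · subst hne; exact Relation.ReflTransGen.refl
      · obtain ⟨w, h1, h2⟩ := hdiam x y hxy hne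
        exact Relation.ReflTransGen.head h1 (Relation.ReflTransGen.single h2)
    · intro h
      induction h with
      | refl => exact hE.refl x
      | tail _ hG ih => exact hE.trans ih (hGE _ _ hG)
  · intro x y hxy hne
    obtain ⟨w, h1, h2⟩ := hdiam x y hxy hne
    exact Or.inr ⟨w, h1, h2⟩
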